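/- Let k and n be integers with 3 ≤ k < n and let α > 0 be a real number. Define F(x) = x^α and f(x) = α·x^{α−1} for x ∈ [0,1], and define β(x) = (Γ(n−k+1)·Γ(n−1+1/α) / (Γ(n−1)·Γ(n−k+1+1/α))) · x, where Γ is the Gamma function. Then β is strictly increasing on [0,1], and for every x ∈ [0,1], ∫₀^x (x − β(y))·F(y)^{n−k}·(F(x) − F(y))^{k−3}·f(y) dy = 0. -/

import Mathlib

open MeasureTheory intervalIntegral Set

lemma betaI (p : ℕ) : ∀ s : ℝ, 0 < s →
    (∫ u in (0:ℝ)..1, u ^ (s-1) * (1-u)^p)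
      = Real.Gamma s * p.factorial / Real.Gamma (s + p + 1) := by
  induction p with
  | zero =>
    intro s hs
    have h1 : (∫ u in (0:ℝ)..1, u ^ (s-1) * (1-u)^(0:ℕ)) = ∫ u in (0:ℝ)..1, u ^ (s-1) := by
      apply integral_congr; intro u _; simp
    rw [h1, integral_rpow (Or.inl (by linarith))]
    have h2 : s - 1 + 1 = s := by ring
    rw [h2, Real.one_rpow, Real.zero_rpow hs.ne']
    have h3 : s + (0:ℕ) + 1 = s + 1 := by push_cast; ring
    rw [h3, Real.Gamma_add_one hs.ne']
    have hΓ := Real.Gamma_pos_of_pos hs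
    field_simp
    norm_num
  | succ p ih =>
    intro s hs
    have hcont : ContinuousOn (fun u : ℝ => (1-u)^p) (uIcc (0:ℝ) 1) :=
      ((continuous_const.sub continuous_id).pow p).continuousOn
    have i1 : IntervalIntegrable (fun u : ℝ => u ^ (s-1) * (1-u)^p) volume 0 1 :=
      (intervalIntegrable_rpow' (by linarith)).mul_continuousOn hcont
    have i2 : IntervalIntegrable (fun u : ℝ => u ^ (s+1-1) * (1-u)^p) volume 0 1 :=
      (intervalIntegrable_rpow' (by linarith)).mul_continuousOn hcont
    have key : EqOn (fun u : ℝ => u ^ (s-1) * (1-u)^(p+1))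
        (fun u : ℝ => u ^ (s-1) * (1-u)^p - u ^ (s+1-1) * (1-u)^p) (uIcc (0:ℝ) 1) := by
      intro u _
      rcases eq_or_ne u 0 with rfl | hu
      · have h4 : s + 1 - 1 = s := by ring
        simp [h4, Real.zero_rpow hs.ne']
      · have h4 : u ^ (s+1-1) = u ^ (s-1) * u := by
          have : s + 1 - 1 = (s-1) + 1 := by ring
          rw [this, Real.rpow_add_one hu]
        simp only [h4, pow_succ]; ring
    rw [integral_congr key, integral_sub i1 i2, ih s hs, ih (s+1) (by linarith)]
    have e1 : s + 1 + p + 1 = (s + p + 1) + 1 := by ring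
    have e2 : s + (p+1:ℕ) + 1 = (s + p + 1) + 1 := by push_cast; ring
    have hsp : (0:ℝ) < s + p + 1 := by positivity
    rw [e1, e2, Real.Gamma_add_one hsp.ne', Real.Gamma_add_one hs.ne',
      Nat.factorial_succ]
    have hΓ1 := (Real.Gamma_pos_of_pos hs).ne'
    have hΓ2 := (Real.Gamma_pos_of_pos hsp).ne'
    push_cast
    field_simp
    ring

theorem kth_price_equilibrium_polynomial
    (k n : ℕ) (hk : 3 ≤ k) (hkn : k < n) (α : ℝ) (hα : 0 < α)
    (F f β : ℝ → ℝ)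
    (hF : ∀ x ∈ Icc (0:ℝ) 1, F x = x ^ α)
    (hf : ∀ x ∈ Icc (0:ℝ) 1, f x = α * x ^ (α - 1))
    (hβ : ∀ x ∈ Icc (0:ℝ) 1, β x =
      (Real.Gamma ((n : ℝ) - k + 1) * Real.Gamma ((n : ℝ) - 1 + 1 / α) /
        (Real.Gamma ((n : ℝ) - 1) * Real.Gamma ((n : ℝ) - k + 1 + 1 / α))) * x) :
    StrictMonoOn β (Icc (0:ℝ) 1) ∧
    ∀ x ∈ Icc (0:ℝ) 1,
      ∫ y in (0:ℝ)..x,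
        (x - β y) * F y ^ (n - k) * (F x - F y) ^ (k - 3) * f y = 0 := by
  have hn4 : 4 ≤ n := by omega
  have hkr : (3:ℝ) ≤ k := by exact_mod_cast hk
  have hnk : (k:ℝ) < n := by exact_mod_cast hkn
  set c : ℝ := Real.Gamma ((n : ℝ) - k + 1) * Real.Gamma ((n : ℝ) - 1 + 1 / α) /
        (Real.Gamma ((n : ℝ) - 1) * Real.Gamma ((n : ℝ) - k + 1 + 1 / α)) with hcdef
  have hΓ1 := Real.Gamma_pos_of_pos (show (0:ℝ) < (n:ℝ) - k + 1 by linarith)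
  have hΓ2 := Real.Gamma_pos_of_pos (show (0:ℝ) < (n:ℝ) - 1 + 1/α by
    have := one_div_pos.mpr hα; linarith)
  have hΓ3 := Real.Gamma_pos_of_pos (show (0:ℝ) < (n:ℝ) - 1 by linarith)
  have hΓ4 := Real.Gamma_pos_of_pos (show (0:ℝ) < (n:ℝ) - k + 1 + 1/α by
    have := one_div_pos.mpr hα; linarith)
  have hc : 0 < c := by rw [hcdef]; positivity
  constructor
  · intro a ha b hb hab
    rw [hβ a ha, hβ b hb]
    exact (mul_lt_mul_iff_right₀ hc).mpr hab
  intro x hx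
  rcases eq_or_lt_of_le hx.1 with hx0 | hx0
  · rw [← hx0]; simp
  set m : ℕ := n - k with hmdef
  set p : ℕ := k - 3 with hpdef
  have hmc : (m:ℝ) = (n:ℝ) - k := by rw [hmdef]; push_cast [Nat.cast_sub hkn.le]; ring
  have hpc : (p:ℝ) = (k:ℝ) - 3 := by rw [hpdef]; push_cast [Nat.cast_sub hk]; ring
  set g : ℝ → ℝ := fun y => (x - c*y) * (y^α)^m * (x^α - y^α)^p * (α * y^(α-1)) with hgdef
  have hsub : Icc (0:ℝ) x ⊆ Icc (0:ℝ) 1 := Icc_subset_Icc le_rfl hx.2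
  have step1 : (∫ y in (0:ℝ)..x,
      (x - β y) * F y ^ (n - k) * (F x - F y) ^ (k - 3) * f y) = ∫ y in (0:ℝ)..x, g y := by
    apply integral_congr
    intro y hy
    rw [uIcc_of_le hx.1] at hy
    have hy1 : y ∈ Icc (0:ℝ) 1 := hsub hy
    simp only [hF y hy1, hF x hx, hf y hy1, hβ y hy1, hgdef]
    rfl
  rw [step1]
  -- linear substitution y = t * x
  have step2 : (∫ t in (0:ℝ)..1, g (t*x)) = x⁻¹ • ∫ y in (0:ℝ)..x, g y := by
    have := integral_comp_mul_right (a := (0:ℝ)) (b := 1) (fun y => g y) hx0.ne'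
    simpa using this
  have step2' : (∫ y in (0:ℝ)..x, g y) = x • ∫ t in (0:ℝ)..1, g (t*x) := by
    rw [step2, smul_smul, mul_inv_cancel₀ hx0.ne', one_smul]
  rw [step2']
  set h' : ℝ → ℝ := fun t => (1 - c*t) * (t^α)^m * (1 - t^α)^p * (α * t^(α-1)) with hh'def
  have hxx : x ^ α = x^(α-1) * x := by
    have h5 : α = (α - 1) + 1 := by ring
    rw [h5, Real.rpow_add_one hx0.ne']; ring_nf
  have step3 : (∫ t in (0:ℝ)..1, g (t*x)) = (x^α)^(m+p+1) * ∫ t in (0:ℝ)..1, h' t := by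
    rw [← intervalIntegral.integral_const_mul]
    apply integral_congr
    intro t ht
    rw [uIcc_of_le zero_le_one] at ht
    have ht0 : 0 ≤ t := ht.1
    have e1 : (t*x)^α = t^α * x^α := Real.mul_rpow ht0 hx0.le
    have e2 : (t*x)^(α-1) = t^(α-1) * x^(α-1) := Real.mul_rpow ht0 hx0.le
    have e6 : x ^ α - t ^ α * x ^ α = x ^ α * (1 - t ^ α) := by ring
    simp only [hgdef, hh'def, e1, e2]
    rw [e6]
    simp only [hxx, mul_pow]
    ring
  rw [step3]
  set φ : ℝ → ℝ := fun u => (1 - c * u^(1/α)) * (u^m * (1-u)^p) with hφdef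
  have hφc : Continuous φ := by
    apply Continuous.mul
    · exact continuous_const.sub (continuous_const.mul
        (Real.continuous_rpow_const (by positivity)))
    · exact (continuous_pow m).mul ((continuous_const.sub continuous_id).pow p)
  have hfc : Continuous (fun t : ℝ => t ^ α) := Real.continuous_rpow_const hα.le
  -- substitution u = t^α
  have step4 : (∫ t in (0:ℝ)..1, h' t) = ∫ u in (0:ℝ)..1, φ u := by
    have heq : EqOn h' (fun t => (α * t^(α-1)) • (φ ∘ (fun t : ℝ => t ^ α)) t)
        (uIcc (0:ℝ) 1) := by
      intro t ht
      rw [uIcc_of_le zero_le_one] at ht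
      have e3 : (t^α)^(1/α) = t := by
        rw [← Real.rpow_mul ht.1, mul_one_div, div_self hα.ne', Real.rpow_one]
      simp only [hh'def, hφdef, Function.comp, smul_eq_mul, e3]
      ring
    rw [integral_congr heq]
    have hI : (∫ t in (0:ℝ)..1, (α * t^(α-1)) • (φ ∘ (fun t : ℝ => t ^ α)) t)
        = ∫ u in ((0:ℝ)^α)..((1:ℝ)^α), φ u := by
      apply integral_comp_smul_deriv''' (f := fun t : ℝ => t ^ α)
        (f' := fun t : ℝ => α * t^(α-1))
      · exact hfc.continuousOn
      · intro t ht
        simp only [min_eq_left zero_le_one, max_eq_right zero_le_one] at ht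
        exact (Real.hasDerivAt_rpow_const (Or.inl ht.1.ne')).hasDerivWithinAt
      · exact hφc.continuousOn
      · exact hφc.continuousOn.integrableOn_compact
          (isCompact_uIcc.image hfc)
      · rw [← intervalIntegrable_iff']
        have base : IntervalIntegrable
            (fun t : ℝ => t^(α-1) * (α * φ (t^α))) volume 0 1 :=
          (intervalIntegrable_rpow' (by linarith)).mul_continuousOn
            (continuous_const.mul (hφc.comp hfc)).continuousOn
        have : (fun t : ℝ => (α * t^(α-1)) • (φ ∘ (fun t : ℝ => t ^ α)) t)
            = fun t : ℝ => t^(α-1) * (α * φ (t^α)) := by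
          funext t; simp [Function.comp, smul_eq_mul]; ring
        rw [this]; exact base
    rw [hI, Real.zero_rpow hα.ne', Real.one_rpow]
  rw [step4]
  -- split and evaluate
  have i1 : IntervalIntegrable (fun u : ℝ => u^m * (1-u)^p) volume 0 1 :=
    ((continuous_pow m).mul ((continuous_const.sub continuous_id).pow p)).intervalIntegrable _ _
  have i2 : IntervalIntegrable (fun u : ℝ => u^(1/α) * (u^m * (1-u)^p)) volume 0 1 :=
    ((Real.continuous_rpow_const (by positivity)).mul
      ((continuous_pow m).mul ((continuous_const.sub continuous_id).pow p))).intervalIntegrable _ _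
  have step5 : (∫ u in (0:ℝ)..1, φ u)
      = (∫ u in (0:ℝ)..1, u^m * (1-u)^p)
        - c * ∫ u in (0:ℝ)..1, u^(1/α) * (u^m * (1-u)^p) := by
    rw [← intervalIntegral.integral_const_mul, ← integral_sub i1 (i2.const_mul c)]
    · apply integral_congr
      intro u _
      simp only [hφdef]; ring
  have hA : (∫ u in (0:ℝ)..1, (u:ℝ)^m * (1-u)^p)
      = Real.Gamma ((m:ℝ)+1) * p.factorial / Real.Gamma ((m:ℝ)+1 + p + 1) := by
    rw [← betaI p ((m:ℝ)+1) (by positivity)]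
    apply integral_congr
    intro u _
    have e4 : (m:ℝ) + 1 - 1 = (m:ℝ) := by ring
    simp only [e4, Real.rpow_natCast]
  have hB : (∫ u in (0:ℝ)..1, u^(1/α) * ((u:ℝ)^m * (1-u)^p))
      = Real.Gamma ((m:ℝ)+1+1/α) * p.factorial / Real.Gamma ((m:ℝ)+1+1/α + p + 1) := by
    rw [← betaI p ((m:ℝ)+1+1/α) (by positivity)]
    apply integral_congr
    intro u hu
    beta_reduce
    rw [uIcc_of_le zero_le_one] at hu
    have e5 : (m:ℝ) + 1 + 1/α - 1 = 1/α + (m:ℝ) := by ring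
    rw [e5]
    rcases eq_or_ne u 0 with rfl | hu0
    · rw [Real.zero_rpow (one_div_ne_zero hα.ne'),
        Real.zero_rpow (by positivity : 1/α + (m:ℝ) ≠ 0)]
      ring
    · rw [Real.rpow_add (lt_of_le_of_ne hu.1 (Ne.symm hu0)), Real.rpow_natCast]
      ring
  rw [step5, hA, hB]
  have em1 : (m:ℝ) + 1 + p + 1 = (n:ℝ) - 1 := by rw [hmc, hpc]; ring
  have em2 : (m:ℝ) + 1 + 1/α + p + 1 = (n:ℝ) - 1 + 1/α := by rw [hmc, hpc]; ring
  have em3 : (m:ℝ) + 1 = (n:ℝ) - k + 1 := by rw [hmc]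
  rw [em1, em2, em3]
  have habs : ∀ G1 G2 G3 G4 P : ℝ, G2 ≠ 0 → G3 ≠ 0 → G4 ≠ 0 →
      G1 * P / G3 - G1 * G2 / (G3 * G4) * (G4 * P / G2) = 0 := by
    intro G1 G2 G3 G4 P h2 h3 h4
    field_simp
    ring
  have hzero : Real.Gamma ((n:ℝ)-k+1) * p.factorial / Real.Gamma ((n:ℝ)-1)
      - c * (Real.Gamma ((n:ℝ)-k+1+1/α) * p.factorial / Real.Gamma ((n:ℝ)-1+1/α)) = 0 := by
    rw [hcdef]
    exact habs _ _ _ _ _ hΓ2.ne' hΓ3.ne' hΓ4.ne'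
  rw [hzero, mul_zero, smul_zero]
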